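/- Let N ≥ 1, s ≥ 1, Ω ⊆ ℤ/Nℤ nonempty, and K(t) = ∑_{ω ∈ Ω} e^{2πiωt/N}. If |K(t)| < K(0)/(2s) for all t ≠ 0 in ℤ/Nℤ, then |Ω| ≥ 4s²N/(N + 4s² − 1). -/

import Mathlib

open Finset Complex

/-- The idempotent `K(t) = ∑_{ω ∈ Ω} e(ωt/N)`. -/
noncomputable def idemK (N : ℕ) [NeZero N] (Ω : Finset (ZMod N)) (t : ZMod N) : ℂ :=
  ∑ ω ∈ Ω, Complex.exp (2 * Real.pi * Complex.I * (ω.val * t.val) / N)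

lemma orth (N : ℕ) [NeZero N] (k : ℤ) :
    ∑ t : ZMod N, Complex.exp (2 * Real.pi * Complex.I * (k * t.val) / N) =
      if (N : ℤ) ∣ k then (N : ℂ) else 0 := by
  have hN0 : (N : ℂ) ≠ 0 := Nat.cast_ne_zero.mpr (NeZero.ne N)
  have h1 : ∑ t : ZMod N, Complex.exp (2 * Real.pi * Complex.I * (k * t.val) / N) =
      ∑ j ∈ Finset.range N, Complex.exp (2 * Real.pi * Complex.I * (k * j) / N) := by
    refine Finset.sum_nbij' (fun t => t.val) (fun j => (j : ZMod N)) ?_ ?_ ?_ ?_ ?_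
    · intro a _; exact Finset.mem_range.mpr a.val_lt
    · intro a _; exact Finset.mem_univ _
    · intro a _; exact ZMod.natCast_rightInverse a
    · intro a ha; exact ZMod.val_cast_of_lt (Finset.mem_range.mp ha)
    · intro a _; rfl
  set z : ℂ := Complex.exp (2 * Real.pi * Complex.I * k / N) with hz
  have hpow : ∀ j : ℕ, Complex.exp (2 * Real.pi * Complex.I * (k * j) / N) = z ^ j := by
    intro j
    rw [hz, ← Complex.exp_nat_mul]
    ring_nf
  rw [h1]
  simp_rw [hpow]
  by_cases hdvd : (N : ℤ) ∣ k
  · obtain ⟨c, hc⟩ := id hdvd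
    have hz1 : z = 1 := by
      rw [hz, hc]
      rw [show (2 * Real.pi * Complex.I * (↑(↑N * c) : ℂ) / N : ℂ) = c * (2 * Real.pi * Complex.I) by
        push_cast; field_simp]
      exact Complex.exp_int_mul_two_pi_mul_I c
    simp [hz1, hdvd]
  · have hz1 : z ≠ 1 := by
      intro h
      rw [hz, Complex.exp_eq_one_iff] at h
      obtain ⟨n, hn⟩ := h
      apply hdvd
      refine ⟨n, ?_⟩
      have h2 : (2 * Real.pi * Complex.I : ℂ) ≠ 0 := by
        simp [Real.pi_ne_zero, Complex.I_ne_zero]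
      field_simp at hn
      have : (k : ℂ) = N * n := by
        apply mul_left_cancel₀ h2
        linear_combination (2 * Real.pi * Complex.I) * hn
      exact_mod_cast this
    rw [geom_sum_eq hz1]
    have hzN : z ^ N = 1 := by
      rw [hz, ← Complex.exp_nat_mul]
      rw [show (N : ℂ) * (2 * Real.pi * Complex.I * k / N) = k * (2 * Real.pi * Complex.I) by
        field_simp]
      exact Complex.exp_int_mul_two_pi_mul_I k
    simp [hzN, hdvd]

lemma dvd_iff_eq (N : ℕ) [NeZero N] (a b : ZMod N) :
    (N : ℤ) ∣ (a.val : ℤ) - b.val ↔ a = b := by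
  rw [← ZMod.intCast_zmod_eq_zero_iff_dvd]
  push_cast
  rw [ZMod.natCast_val, ZMod.natCast_val, ZMod.cast_id, ZMod.cast_id, sub_eq_zero]

lemma parseval (N : ℕ) [NeZero N] (Ω : Finset (ZMod N)) :
    ∑ t : ZMod N, (‖idemK N Ω t‖) ^ 2 = N * Ω.card := by
  have expand : ∀ t : ZMod N, idemK N Ω t * (starRingEnd ℂ) (idemK N Ω t) =
      ∑ ω ∈ Ω, ∑ ω' ∈ Ω,
        Complex.exp (2 * Real.pi * Complex.I * ((((ω.val : ℤ) - ω'.val) : ℤ) * t.val) / N) := by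
    intro t
    rw [idemK, map_sum, Finset.sum_mul_sum]
    refine Finset.sum_congr rfl fun ω _ => Finset.sum_congr rfl fun ω' _ => ?_
    rw [← Complex.exp_conj, ← Complex.exp_add]
    congr 1
    have hc : (starRingEnd ℂ) (2 * Real.pi * Complex.I * ((ω'.val : ℂ) * t.val) / N) =
        -(2 * Real.pi * Complex.I * ((ω'.val : ℂ) * t.val) / N) := by
      simp only [map_div₀, map_mul, Complex.conj_I, Complex.conj_ofReal, map_natCast,
        map_ofNat]
      ring
    rw [hc]
    push_cast
    ring
  have key : ∑ t : ZMod N, idemK N Ω t * (starRingEnd ℂ) (idemK N Ω t) =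
      (N : ℂ) * Ω.card := by
    simp_rw [expand]
    rw [Finset.sum_comm]
    have : ∀ ω ∈ Ω, ∑ t : ZMod N, ∑ ω' ∈ Ω,
        Complex.exp (2 * Real.pi * Complex.I * ((((ω.val : ℤ) - ω'.val) : ℤ) * t.val) / N)
        = (N : ℂ) := by
      intro ω hω
      rw [Finset.sum_comm]
      have h2 : ∀ ω' ∈ Ω, ∑ t : ZMod N,
          Complex.exp (2 * Real.pi * Complex.I * ((((ω.val : ℤ) - ω'.val) : ℤ) * t.val) / N)
          = if ω' = ω then (N : ℂ) else 0 := by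
        intro ω' _
        rw [orth]
        exact if_congr ((dvd_iff_eq N ω ω').trans eq_comm) rfl rfl
      rw [Finset.sum_congr rfl h2, Finset.sum_ite_eq' Ω ω fun _ => (N : ℂ)]
      simp [hω]
    rw [Finset.sum_congr rfl this, Finset.sum_const, nsmul_eq_mul, mul_comm]
  have cast_eq : ((∑ t : ZMod N, (‖idemK N Ω t‖) ^ 2 : ℝ) : ℂ) =
      ((N : ℝ) * Ω.card : ℝ) := by
    push_cast
    rw [← key]
    refine Finset.sum_congr rfl fun t _ => ?_
    rw [Complex.mul_conj]
    norm_cast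
    exact Complex.sq_norm _
  exact_mod_cast cast_eq

/-- Inequality (8): if `|K(t)| < K(0)/(2s)` for all `t ≠ 0`, then
`|Ω| ≥ 4s²N/(N + 4s² − 1)`. -/
theorem stmt3 (N : ℕ) [NeZero N] (hN : 1 ≤ N) (s : ℕ) (hs : 1 ≤ s)
    (Ω : Finset (ZMod N)) (hΩ : Ω.Nonempty)
    (hK : ∀ t : ZMod N, t ≠ 0 →
      ‖idemK N Ω t‖ < ‖idemK N Ω 0‖ / (2 * s)) :
    (Ω.card : ℝ) ≥ 4 * s ^ 2 * N / (N + 4 * s ^ 2 - 1) := by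
  set m : ℝ := (Ω.card : ℝ) with hm
  have hm0 : 0 < m := by rw [hm]; exact_mod_cast hΩ.card_pos
  have hm1 : 1 ≤ m := by rw [hm]; exact_mod_cast hΩ.card_pos
  have hN1 : (1 : ℝ) ≤ N := by exact_mod_cast hN
  have hs1 : (1 : ℝ) ≤ s := by exact_mod_cast hs
  have hS0 : (0 : ℝ) < (s : ℝ) := by linarith
  have hK0 : idemK N Ω 0 = (Ω.card : ℂ) := by
    rw [idemK]
    simp [ZMod.val_zero]
  have habs0 : ‖idemK N Ω 0‖ = m := by
    rw [hK0]
    simp [hm]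
  -- split Parseval sum
  have hsplit : ∑ t : ZMod N, (‖idemK N Ω t‖) ^ 2 =
      (‖idemK N Ω 0‖) ^ 2 +
        ∑ t ∈ Finset.univ.erase 0, (‖idemK N Ω t‖) ^ 2 := by
    rw [add_comm, Finset.sum_erase_add]
    exact Finset.mem_univ 0
  have hcard : (Finset.univ.erase (0 : ZMod N)).card = N - 1 := by
    rw [Finset.card_erase_of_mem (Finset.mem_univ 0), Finset.card_univ, ZMod.card]
  have hbound : ∑ t ∈ Finset.univ.erase 0, (‖idemK N Ω t‖) ^ 2 ≤
      ((N : ℝ) - 1) * (m ^ 2 / (4 * (s : ℝ) ^ 2)) := by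
    have step : ∀ t ∈ Finset.univ.erase (0 : ZMod N),
        (‖idemK N Ω t‖) ^ 2 ≤ m ^ 2 / (4 * (s : ℝ) ^ 2) := by
      intro t ht
      have ht0 : t ≠ 0 := Finset.ne_of_mem_erase ht
      have h := hK t ht0
      rw [habs0] at h
      have h2 : (‖idemK N Ω t‖) ^ 2 ≤ (m / (2 * s)) ^ 2 :=
        pow_le_pow_left₀ (norm_nonneg _) h.le 2
      calc (‖idemK N Ω t‖) ^ 2 ≤ (m / (2 * s)) ^ 2 := h2
        _ = m ^ 2 / (4 * (s : ℝ) ^ 2) := by rw [div_pow]; ring_nf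
    calc ∑ t ∈ Finset.univ.erase 0, (‖idemK N Ω t‖) ^ 2
        ≤ (Finset.univ.erase (0 : ZMod N)).card • (m ^ 2 / (4 * (s : ℝ) ^ 2)) :=
          Finset.sum_le_card_nsmul _ _ _ step
      _ = ((N : ℝ) - 1) * (m ^ 2 / (4 * (s : ℝ) ^ 2)) := by
          rw [hcard, nsmul_eq_mul, Nat.cast_sub hN, Nat.cast_one]
  have key : (N : ℝ) * m ≤ m ^ 2 + ((N : ℝ) - 1) * (m ^ 2 / (4 * (s : ℝ) ^ 2)) := by
    have hp := parseval N Ω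
    rw [hsplit, habs0] at hp
    linarith [hbound]
  have h4 : (0 : ℝ) < 4 * (s : ℝ) ^ 2 := by positivity
  have key4 : 4 * (s : ℝ) ^ 2 * ((N : ℝ) * m) ≤
      4 * (s : ℝ) ^ 2 * m ^ 2 + ((N : ℝ) - 1) * m ^ 2 := by
    have h := mul_le_mul_of_nonneg_left key h4.le
    calc 4 * (s : ℝ) ^ 2 * ((N : ℝ) * m)
        ≤ 4 * (s : ℝ) ^ 2 * (m ^ 2 + ((N : ℝ) - 1) * (m ^ 2 / (4 * (s : ℝ) ^ 2))) := h
      _ = 4 * (s : ℝ) ^ 2 * m ^ 2 + ((N : ℝ) - 1) * m ^ 2 := by field_simp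
  have hd : (0 : ℝ) < (N : ℝ) + 4 * (s : ℝ) ^ 2 - 1 := by nlinarith
  rw [ge_iff_le, div_le_iff₀ hd]
  rw [← mul_le_mul_iff_of_pos_right hm0]
  nlinarith [key4]
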